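/- arXiv:1905.11819 — 5 statements merged into one kernel-verified Lean document; each statement's English description precedes it below -/
import Mathlib

section
/- Let d ≥ 2 and n ≥ 1, let ψ_1, …, ψ_n be unit vectors in ℂ^d, and let a_1, …, a_n be real numbers with 0 < a_i ≤ 1 such that ∑_{i=1}^n a_i |ψ_i⟩⟨ψ_i| = I_d (i.e., the rank-1 operators a_i|ψ_i⟩⟨ψ_i| form a POVM). Then there exist unitary d×d complex matrices C_1, …, C_{n−1} and real numbers α_1, …, α_{n−1} ∈ [0,1] such that, setting β_l = √(1 − α_l²), K_0 = I_d, and K_l = D_l · C_l · K_{l−1} for l = 1, …, n−1, where D_l is the d×d matrix D_l = e_0 e_1† + β_l · e_1 e_0† + ∑_{k=2}^{d−1} e_k e_k† (with e_j the standard basis vectors), the following hold for every j with 1 ≤ j ≤ n−1: (i) α_j² · K_{j−1}† C_j† (e_0 e_0†) C_j K_{j−1} = a_j |ψ_j⟩⟨ψ_j|, and (ii) K_j† K_j = I_d − ∑_{l=1}^{j} a_l |ψ_l⟩⟨ψ_l|; in particular K_{n−1}† K_{n−1} = a_n |ψ_n⟩⟨ψ_n|. (This is the algebraic content of the theorem that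 any rank-1 POVM with n outcomes on a qudit can be implemented by a one-dimensional discrete quantum walk with 2(n−1) steps.) -/
open Matrix

namespace QW
variable {d : ℕ}

lemma star_mul_self_eq (z : ℂ) : star z * z = ((‖z‖^2 : ℝ) : ℂ) := by
  rw [Complex.star_def, ← Complex.normSq_eq_conj_mul_self]
  norm_cast
  simp [Complex.normSq_eq_norm_sq]

/-- quadratic-form style norm identity -/
lemma star_dot_self (v : Fin d → ℂ) : star v ⬝ᵥ v = ((∑ j, ‖v j‖^2 : ℝ) : ℂ) := by
  simp only [dotProduct, Pi.star_apply, star_mul_self_eq]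
  push_cast
  rfl

lemma star_dot_self_re_nonneg (v : Fin d → ℂ) : 0 ≤ (star v ⬝ᵥ v).re := by
  rw [star_dot_self, Complex.ofReal_re]
  exact Finset.sum_nonneg fun j _ => sq_nonneg _

lemma star_dot_self_im (v : Fin d → ℂ) : (star v ⬝ᵥ v).im = 0 := by
  rw [star_dot_self, Complex.ofReal_im]

/-- C† E₀₀ C = v v†  when row i0 of C is star v -/
lemma conj_E00_conj (C : Matrix (Fin d) (Fin d) ℂ) (i0 : Fin d) :
    Cᴴ * Matrix.single i0 i0 (1:ℂ) * C = vecMulVec (star (C i0)) (C i0) := by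
  ext p q
  simp only [mul_apply, conjTranspose_apply, Matrix.single, of_apply, vecMulVec_apply,
    Pi.star_apply]
  rw [Finset.sum_eq_single i0]
  · rw [Finset.sum_eq_single i0]
    · simp [mul_comm]
    · intro b _ hb
      have h' : i0 ≠ b := fun h => hb h.symm
      simp [h']
    · simp
  · intro b _ hb
    have : ∀ b1 : Fin d, ¬(i0 = b1 ∧ i0 = b) := by
      rintro b1 ⟨h1, h2⟩; exact hb h2.symm
    simp [this]
  · simp

lemma conj_vecMulVec (K : Matrix (Fin d) (Fin d) ℂ) (v : Fin d → ℂ) :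
    Kᴴ * vecMulVec v (star v) * K = vecMulVec (Kᴴ *ᵥ v) (star (Kᴴ *ᵥ v)) := by
  rw [vecMulVec_eq Unit, vecMulVec_eq Unit, replicateCol_mulVec, star_mulVec, replicateRow_vecMul,
    conjTranspose_conjTranspose]
  simp only [Matrix.mul_assoc]

lemma vecMulVec_real_smul (c : ℝ) (v : Fin d → ℂ) :
    vecMulVec ((c:ℂ) • v) (star ((c:ℂ) • v)) = ((c^2 : ℝ) : ℂ) • vecMulVec v (star v) := by
  ext p q
  simp [vecMulVec_apply, Complex.star_def, mul_mul_mul_comm]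
  ring

variable {d : ℕ}

/-- the swap map: 0 ↦ 1, 1 ↦ 0, k ↦ k -/
def sig (hd : 2 ≤ d) (j : Fin d) : Fin d :=
  if j.1 = 0 then ⟨1, by omega⟩ else if j.1 = 1 then ⟨0, by omega⟩ else j

def cf (b : ℝ) (j : Fin d) : ℂ := if j.1 = 0 then (b:ℂ) else 1

lemma sig_inj (hd : 2 ≤ d) {p q : Fin d} (h : sig hd p = sig hd q) : p = q := by
  unfold sig at h
  rw [Fin.ext_iff] at h ⊢
  split_ifs at h <;> simp_all

noncomputable def Dmat (hd : 2 ≤ d) (α : ℝ) : Matrix (Fin d) (Fin d) ℂ :=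
  Matrix.single (⟨0, by omega⟩ : Fin d) (⟨1, by omega⟩ : Fin d) (1 : ℂ)
    + ((Real.sqrt (1 - α ^ 2) : ℝ) : ℂ) •
        Matrix.single (⟨1, by omega⟩ : Fin d) (⟨0, by omega⟩ : Fin d) (1 : ℂ)
    + ∑ k : Fin d, if 2 ≤ k.1 then Matrix.single k k (1 : ℂ) else 0

lemma sum_tail_apply (i j : Fin d) :
    (∑ k : Fin d, if 2 ≤ k.1 then Matrix.single k k (1:ℂ) else 0) i j
      = if 2 ≤ i.1 ∧ i = j then 1 else 0 := by
  simp only [Matrix.sum_apply, apply_ite (fun M : Matrix (Fin d) (Fin d) ℂ => M i j), Matrix.zero_apply,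
    Matrix.single, of_apply]
  have key : ∀ k : Fin d,
      (if 2 ≤ k.1 then (if k = i ∧ k = j then (1:ℂ) else 0) else 0)
        = if k = i then (if 2 ≤ i.1 ∧ i = j then (1:ℂ) else 0) else 0 := by
    intro k
    by_cases hk : k = i
    · subst hk
      by_cases h2 : 2 ≤ k.1
      · by_cases hij : k = j <;> simp [h2, hij]
      · simp [h2]
    · have : ¬(k = i ∧ k = j) := fun h => hk h.1
      simp [hk, this]
  rw [Finset.sum_congr rfl (fun k _ => key k), Finset.sum_ite_eq' Finset.univ i]
  simp

lemma Dmat_apply (hd : 2 ≤ d) (α : ℝ) (i j : Fin d) :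
    Dmat hd α i j = if i = sig hd j then cf (Real.sqrt (1 - α ^ 2)) j else 0 := by
  unfold Dmat
  simp only [Matrix.add_apply, Matrix.smul_apply, smul_eq_mul, mul_ite, mul_one, mul_zero, sum_tail_apply]
  simp only [Matrix.single, of_apply]
  unfold sig cf
  simp only [Fin.ext_iff, apply_ite Fin.val]
  split_ifs <;> first | (exfalso; omega) | (push_cast; ring)

lemma DtD (hd : 2 ≤ d) (α : ℝ) (hα : α^2 ≤ 1) :
    (Dmat hd α)ᴴ * Dmat hd α
      = 1 - ((α^2 : ℝ) : ℂ) • Matrix.single (⟨0, by omega⟩ : Fin d) (⟨0, by omega⟩ : Fin d) (1:ℂ) := by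
  have hb : (Real.sqrt (1 - α ^ 2))^2 = 1 - α^2 := Real.sq_sqrt (by linarith)
  ext p q
  simp only [mul_apply, conjTranspose_apply, Dmat_apply hd α, Matrix.sub_apply, Matrix.smul_apply,
    one_apply, Matrix.single, of_apply, smul_eq_mul, mul_ite, mul_one, mul_zero]
  rw [Finset.sum_eq_single (sig hd p)]
  · by_cases hpq : p = q
    · subst hpq
      rw [if_pos rfl, if_pos rfl]
      unfold cf
      by_cases hp0 : p.1 = 0
      · have he : (⟨0, by omega⟩ : Fin d) = p := Fin.ext hp0.symm
        rw [if_pos hp0, Complex.star_def, Complex.conj_ofReal,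
          ← Complex.ofReal_mul, ← sq, hb]
        simp only [he, and_self, if_pos rfl]
        push_cast
        ring
      · have he : ¬((⟨0, by omega⟩ : Fin d) = p ∧ (⟨0, by omega⟩ : Fin d) = p) := by
          rintro ⟨h1, -⟩
          exact hp0 (by rw [← h1])
        rw [if_neg hp0, if_neg he]
        simp
    · have h1 : ¬ sig hd p = sig hd q := fun h => hpq (sig_inj hd h)
      have h2 : ¬((⟨0, by omega⟩ : Fin d) = p ∧ (⟨0, by omega⟩ : Fin d) = q) := by
        rintro ⟨ha, hb⟩
        exact hpq (ha ▸ hb ▸ rfl)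
      rw [if_neg h1, if_neg hpq, if_neg h2]
      simp
  · intro b _ hb
    rw [if_neg hb]
    simp
  · simp

variable {d : ℕ}

lemma eq_zero_of_star_dot_self {v : Fin d → ℂ} (h : star v ⬝ᵥ v = 0) : v = 0 := by
  have : ∀ j, star (v j) * v j = 0 → v j = 0 := fun j hj => by
    by_contra hne
    exact hne (by simpa using (mul_eq_zero.mp hj).resolve_left (star_ne_zero.mpr hne))
  funext j
  have hsum : ∑ i, star (v i) * v i = 0 := h
  have hnn : ∀ i ∈ Finset.univ, (0:ℝ) ≤ (star (v i) * v i).re := fun i _ => by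
    have h1 : star (v i) * v i = ((Complex.normSq (v i) : ℝ) : ℂ) := by
      rw [Complex.star_def, mul_comm, Complex.mul_conj]
    rw [h1, Complex.ofReal_re]
    exact Complex.normSq_nonneg (v i)
  have hre : ∑ i, (star (v i) * v i).re = 0 := by
    have := congrArg Complex.re hsum
    simpa [Complex.re_sum] using this
  have hz : (star (v j) * v j).re = 0 :=
    (Finset.sum_eq_zero_iff_of_nonneg hnn).mp hre j (Finset.mem_univ j)
  have : Complex.normSq (v j) = 0 := by
    have h1 : star (v j) * v j = Complex.normSq (v j) := by
      rw [Complex.star_def, mul_comm, Complex.mul_conj]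
    rw [h1] at hz
    simpa using hz
  simpa using Complex.normSq_eq_zero.mp this

/-- A unitary matrix with prescribed row `i0` equal to `star v`, for a unit vector `v`. -/
lemma exists_unitary_row (v : Fin d → ℂ) (hv : star v ⬝ᵥ v = 1) (i0 : Fin d) :
    ∃ C : Matrix (Fin d) (Fin d) ℂ, C ∈ Matrix.unitaryGroup (Fin d) ℂ ∧ C i0 = star v := by
  classical
  let w : EuclideanSpace ℂ (Fin d) := WithLp.toLp 2 v
  have hw : ∀ x : ({i0} : Set (Fin d)), ∀ y : ({i0} : Set (Fin d)),
      (inner ℂ ((fun _ => w) x) ((fun _ => w) y) : ℂ) = if x = y then 1 else 0 := by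
    rintro ⟨x, hx⟩ ⟨y, hy⟩
    simp only [Set.mem_singleton_iff] at hx hy
    subst hx; subst hy
    rw [if_pos rfl]
    rw [PiLp.inner_apply]
    simpa [dotProduct, w, Complex.conj_mul'] using hv
  have horth : Orthonormal ℂ (Set.restrict ({i0} : Set (Fin d)) (fun _ => w)) := by
    rw [orthonormal_iff_ite]
    exact hw
  obtain ⟨b, hb⟩ := horth.exists_orthonormalBasis_extension_of_card_eq
    (by simp) (v := fun _ => w)
  have hb0 : b i0 = w := hb i0 rfl
  refine ⟨Matrix.of (fun i k => star (b i k)), ?_, ?_⟩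
  · rw [Matrix.mem_unitaryGroup_iff]
    ext i j
    have := b.orthonormal
    rw [orthonormal_iff_ite] at this
    have h2 := this i j
    rw [PiLp.inner_apply] at h2
    simp only [RCLike.inner_apply] at h2
    simp only [Matrix.mul_apply, Matrix.star_apply, Matrix.of_apply, star_star, one_apply]
    rw [← h2]
    exact Finset.sum_congr rfl fun k _ => by simp [mul_comm]
  · funext k
    simp [hb0, w]

/-- If `M` is hermitian, `M = a • ψψ† + R` with `R` having psd quadratic form, `a > 0`,
`ψ ≠ 0`, then `ψ` is in the range of `M`. -/
lemma exists_mulVec_eq (M R : Matrix (Fin d) (Fin d) ℂ) (ψ : Fin d → ℂ) (a : ℝ)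
    (ha : 0 < a) (hM : Mᴴ = M)
    (hdecomp : M = (a : ℂ) • vecMulVec ψ (star ψ) + R)
    (hR : ∀ x, 0 ≤ (star x ⬝ᵥ R *ᵥ x).re) (hψ : ψ ≠ 0) :
    ∃ w, M *ᵥ w = ψ := by
  classical
  set T := M.mulVecLin with hT
  -- range and kernel are disjoint
  have hdisj : Disjoint (LinearMap.range T) (LinearMap.ker T) := by
    rw [disjoint_iff_inf_le]
    rintro x ⟨⟨y, hy⟩, hker⟩
    have hx : M *ᵥ x = 0 := hker
    have hxy : M *ᵥ y = x := hy
    have : star x ⬝ᵥ x = 0 := by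
      calc star x ⬝ᵥ x = star (M *ᵥ y) ⬝ᵥ x := by rw [hxy]
        _ = (star y ᵥ* Mᴴ) ⬝ᵥ x := by rw [star_mulVec]
        _ = star y ⬝ᵥ (Mᴴ *ᵥ x) := by rw [dotProduct_mulVec]
        _ = 0 := by rw [hM, hx, dotProduct_zero]
    exact eq_zero_of_star_dot_self this
  have hsup : LinearMap.range T ⊔ LinearMap.ker T = ⊤ := by
    apply Submodule.eq_top_of_disjoint
    · exact (LinearMap.finrank_range_add_finrank_ker T).ge
    · exact hdisj
  -- decompose ψ
  have hmem : ψ ∈ LinearMap.range T ⊔ LinearMap.ker T := hsup ▸ Submodule.mem_top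
  obtain ⟨r, hr, k, hk, hrk⟩ := Submodule.mem_sup.mp hmem
  obtain ⟨y, hy⟩ := hr
  have hky : M *ᵥ k = 0 := hk
  have hyr : M *ᵥ y = r := hy
  -- show the kernel part k is orthogonal to ψ
  set c : ℂ := star ψ ⬝ᵥ k with hc
  have hPk : (vecMulVec ψ (star ψ)) *ᵥ k = c • ψ := by
    ext i
    simp only [vecMulVec_apply, mulVec, dotProduct, Pi.smul_apply, smul_eq_mul, hc,
      Finset.sum_mul, Finset.mul_sum]
    exact Finset.sum_congr rfl fun x _ => by ring
  have hkψ : star k ⬝ᵥ ψ = star c := by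
    rw [hc, star_dotProduct]
  have hq : (a:ℂ) * (c * star c) + star k ⬝ᵥ R *ᵥ k = 0 := by
    have h0 : star k ⬝ᵥ M *ᵥ k = 0 := by rw [hky, dotProduct_zero]
    rw [hdecomp, add_mulVec, smul_mulVec, hPk, dotProduct_add, dotProduct_smul,
      dotProduct_smul, hkψ] at h0
    simpa [smul_eq_mul, mul_assoc] using h0
  have hc0 : c = 0 := by
    have h1 : a * Complex.normSq c + (star k ⬝ᵥ R *ᵥ k).re = 0 := by
      have := congrArg Complex.re hq
      simpa [Complex.mul_conj, Complex.star_def] using this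
    have h2 := hR k
    have h3 : Complex.normSq c ≤ 0 := by nlinarith [Complex.normSq_nonneg c]
    have h4 : Complex.normSq c = 0 := le_antisymm h3 (Complex.normSq_nonneg c)
    exact Complex.normSq_eq_zero.mp h4
  -- show k = 0
  have hk0 : k = 0 := by
    have hkk : star k ⬝ᵥ k = 0 := by
      have h1 : star k ⬝ᵥ ψ = 0 := by
        rw [star_dotProduct, ← hc, hc0, star_zero]
      have h2 : star k ⬝ᵥ r = 0 := by
        rw [← hyr, dotProduct_mulVec]
        have hvm : star k ᵥ* M = 0 := by
          have hsm := star_mulVec Mᴴ k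
          rw [conjTranspose_conjTranspose, hM, hky, star_zero] at hsm
          exact hsm.symm
        rw [hvm, zero_dotProduct]
      have : star k ⬝ᵥ (r + k) = 0 := by rw [hrk, h1]
      rw [dotProduct_add, h2, zero_add] at this
      exact this
    exact eq_zero_of_star_dot_self hkk
  refine ⟨y, ?_⟩
  rw [hyr, ← hrk, hk0, add_zero]

variable {d : ℕ}


lemma vecMulVec_mulVec' (ψ φ x : Fin d → ℂ) :
    vecMulVec ψ φ *ᵥ x = (φ ⬝ᵥ x) • ψ := by
  ext i
  simp only [vecMulVec_apply, mulVec, dotProduct, Pi.smul_apply, smul_eq_mul, Finset.sum_mul,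
    Finset.mul_sum]
  exact Finset.sum_congr rfl fun j _ => by ring

lemma aP_form (a : ℝ) (ψ x : Fin d → ℂ) :
    star x ⬝ᵥ ((a:ℂ) • vecMulVec ψ (star ψ)) *ᵥ x
      = ((a * Complex.normSq (star ψ ⬝ᵥ x) : ℝ) : ℂ) := by
  rw [smul_mulVec, vecMulVec_mulVec', dotProduct_smul, dotProduct_smul]
  rw [star_dotProduct x ψ]
  push_cast
  rw [smul_eq_mul, smul_eq_mul]
  rw [show ((Complex.normSq (star ψ ⬝ᵥ x) : ℝ) : ℂ)
      = (star ψ ⬝ᵥ x) * star (star ψ ⬝ᵥ x) by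
    rw [Complex.star_def, Complex.mul_conj]]

lemma aP_form_re_nonneg (a : ℝ) (ha : 0 ≤ a) (ψ x : Fin d → ℂ) :
    0 ≤ (star x ⬝ᵥ ((a:ℂ) • vecMulVec ψ (star ψ)) *ᵥ x).re := by
  rw [aP_form, Complex.ofReal_re]
  exact mul_nonneg ha (Complex.normSq_nonneg _)

/-- Main step: given `K†K = a ψψ† + R` with psd `R`, find a coin. -/
lemma step (K : Matrix (Fin d) (Fin d) ℂ) (ψ : Fin d → ℂ) (hψ1 : star ψ ⬝ᵥ ψ = 1)
    (a : ℝ) (ha : 0 < a) (R : Matrix (Fin d) (Fin d) ℂ)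
    (hR : ∀ x, 0 ≤ (star x ⬝ᵥ R *ᵥ x).re)
    (hM : Kᴴ * K = (a:ℂ) • vecMulVec ψ (star ψ) + R) (i0 : Fin d) :
    ∃ (C : Matrix (Fin d) (Fin d) ℂ) (α : ℝ), C ∈ Matrix.unitaryGroup (Fin d) ℂ ∧
      0 ≤ α ∧ α ≤ 1 ∧
      ((α^2 : ℝ) : ℂ) • (Kᴴ * Cᴴ * Matrix.single i0 i0 (1:ℂ) * C * K)
        = (a : ℂ) • vecMulVec ψ (star ψ) := by
  have hMh : (Kᴴ * K)ᴴ = Kᴴ * K := by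
    rw [conjTranspose_mul, conjTranspose_conjTranspose]
  have hψ0 : ψ ≠ 0 := by
    intro h
    rw [h] at hψ1
    simp at hψ1
  obtain ⟨w, hw⟩ := exists_mulVec_eq (Kᴴ * K) R ψ a ha hMh hM hR hψ0
  set u : Fin d → ℂ := K *ᵥ w with hu
  have hKu : Kᴴ *ᵥ u = ψ := by rw [hu, mulVec_mulVec, hw]
  set tr : ℝ := ∑ j, ‖u j‖^2 with htr
  have htc : star u ⬝ᵥ u = (tr : ℂ) := star_dot_self u
  have hu0 : u ≠ 0 := by
    intro h
    rw [h] at hKu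
    exact hψ0 (by rw [← hKu]; simp)
  have htrpos : 0 < tr := by
    rcases lt_or_eq_of_le (Finset.sum_nonneg fun j (_ : j ∈ Finset.univ) => sq_nonneg ‖u j‖)
      with h | h
    · exact h
    · exact absurd (eq_zero_of_star_dot_self (by rw [htc, htr, ← h]; simp)) hu0
  -- the quadratic form of K†K at w, two ways
  have hwψ : star w ⬝ᵥ ψ = (tr : ℂ) := by
    rw [← hw, ← mulVec_mulVec, dotProduct_mulVec, ← star_mulVec, ← hu, htc]
  have hkey : (tr:ℂ) = ((a * tr * tr : ℝ) : ℂ) + star w ⬝ᵥ R *ᵥ w := by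
    have h1 : star w ⬝ᵥ (Kᴴ * K) *ᵥ w = (tr:ℂ) := by rw [hw, hwψ]
    rw [hM, add_mulVec, dotProduct_add, aP_form] at h1
    have h2 : Complex.normSq (star ψ ⬝ᵥ w) = tr * tr := by
      have hcc : star ψ ⬝ᵥ w = star ((tr:ℝ):ℂ) := by
        have hcg := congrArg star hwψ
        rw [star_dotProduct w ψ, star_star] at hcg
        exact hcg
      rw [hcc]
      simp [Complex.normSq_ofReal]
    rw [h2] at h1
    rw [← h1]
    push_cast
    ring
  have hatr : a * tr ≤ 1 := by
    have h2 := hR w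
    have h3 : tr ≥ a * tr * tr := by
      have := congrArg Complex.re hkey
      simp only [Complex.ofReal_re, Complex.add_re] at this
      nlinarith
    nlinarith
  set α : ℝ := Real.sqrt (a * tr) with hα
  have hα2 : α^2 = a * tr := Real.sq_sqrt (by positivity)
  have hα0 : 0 ≤ α := Real.sqrt_nonneg _
  have hα1 : α ≤ 1 := by
    rw [hα]
    rw [show (1:ℝ) = Real.sqrt 1 by simp]
    exact Real.sqrt_le_sqrt hatr
  set s : ℝ := Real.sqrt tr with hs
  have hs2 : s^2 = tr := Real.sq_sqrt htrpos.le
  have hspos : 0 < s := Real.sqrt_pos.mpr htrpos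
  set v : Fin d → ℂ := ((s⁻¹ : ℝ) : ℂ) • u with hv
  have hstar_v : star v = ((s⁻¹ : ℝ) : ℂ) • star u := by
    funext j
    simp [hv, Complex.star_def, Complex.conj_ofReal]
  have hv1 : star v ⬝ᵥ v = 1 := by
    rw [hv, hstar_v, smul_dotProduct, dotProduct_smul, htc, smul_eq_mul, smul_eq_mul]
    have hre : s⁻¹ * (s⁻¹ * tr) = 1 := by
      rw [← hs2]
      field_simp
    exact_mod_cast hre
  obtain ⟨C, hCU, hCrow⟩ := exists_unitary_row v hv1 i0
  refine ⟨C, α, hCU, hα0, hα1, ?_⟩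
  have hKv : Kᴴ *ᵥ v = ((s⁻¹ : ℝ) : ℂ) • ψ := by
    rw [hv, mulVec_smul, hKu]
  have key : Kᴴ * Cᴴ * Matrix.single i0 i0 (1:ℂ) * C * K
      = vecMulVec (Kᴴ *ᵥ v) (star (Kᴴ *ᵥ v)) := by
    have h1 : Kᴴ * Cᴴ * Matrix.single i0 i0 (1:ℂ) * C * K
        = Kᴴ * (Cᴴ * Matrix.single i0 i0 (1:ℂ) * C) * K := by
      simp only [Matrix.mul_assoc]
    rw [h1, conj_E00_conj C i0, hCrow, star_star, conj_vecMulVec]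
  rw [key, hKv, vecMulVec_real_smul, smul_smul]
  congr 1
  rw [← Complex.ofReal_mul]
  norm_cast
  rw [hα2, inv_pow, hs2]
  field_simp

lemma mulVec_sum' {d : ℕ} {ι : Type*} (s : Finset ι) (F : ι → Matrix (Fin d) (Fin d) ℂ)
    (x : Fin d → ℂ) : (∑ l ∈ s, F l) *ᵥ x = ∑ l ∈ s, F l *ᵥ x := by
  ext i
  simp only [mulVec, dotProduct, Finset.sum_apply, Matrix.sum_apply, Finset.sum_mul]
  rw [Finset.sum_comm]

lemma dotProduct_sum' {d : ℕ} {ι : Type*} (s : Finset ι) (v : Fin d → ℂ)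
    (F : ι → Fin d → ℂ) : v ⬝ᵥ (∑ l ∈ s, F l) = ∑ l ∈ s, v ⬝ᵥ F l := by
  simp only [dotProduct, Finset.sum_apply, Finset.mul_sum]
  rw [Finset.sum_comm]

open Classical in
noncomputable def pickCA (d : ℕ) (i0 : Fin d) (aj : ℝ) (ψj : Fin d → ℂ)
    (K : Matrix (Fin d) (Fin d) ℂ) : Matrix (Fin d) (Fin d) ℂ × ℝ :=
  if h : ∃ (C : Matrix (Fin d) (Fin d) ℂ) (α : ℝ), C ∈ Matrix.unitaryGroup (Fin d) ℂ ∧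
      0 ≤ α ∧ α ≤ 1 ∧
      ((α^2 : ℝ) : ℂ) • (Kᴴ * Cᴴ * Matrix.single i0 i0 (1:ℂ) * C * K)
        = (aj : ℂ) • vecMulVec ψj (star ψj)
  then (h.choose, h.choose_spec.choose)
  else (1, 0)

lemma pickCA_spec {d : ℕ} {i0 : Fin d} {aj : ℝ} {ψj : Fin d → ℂ}
    {K : Matrix (Fin d) (Fin d) ℂ}
    (h : ∃ (C : Matrix (Fin d) (Fin d) ℂ) (α : ℝ), C ∈ Matrix.unitaryGroup (Fin d) ℂ ∧
      0 ≤ α ∧ α ≤ 1 ∧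
      ((α^2 : ℝ) : ℂ) • (Kᴴ * Cᴴ * Matrix.single i0 i0 (1:ℂ) * C * K)
        = (aj : ℂ) • vecMulVec ψj (star ψj)) :
    (pickCA d i0 aj ψj K).1 ∈ Matrix.unitaryGroup (Fin d) ℂ ∧
      0 ≤ (pickCA d i0 aj ψj K).2 ∧ (pickCA d i0 aj ψj K).2 ≤ 1 ∧
      (((pickCA d i0 aj ψj K).2^2 : ℝ) : ℂ) •
          (Kᴴ * ((pickCA d i0 aj ψj K).1)ᴴ * Matrix.single i0 i0 (1:ℂ) *
            (pickCA d i0 aj ψj K).1 * K)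
        = (aj : ℂ) • vecMulVec ψj (star ψj) := by
  simp only [pickCA, dif_pos h]
  exact h.choose_spec.choose_spec

noncomputable def Kseq (d n : ℕ) (hd : 2 ≤ d) (ψ : Fin n → Fin d → ℂ) (a : Fin n → ℝ) :
    ℕ → Matrix (Fin d) (Fin d) ℂ
  | 0 => 1
  | (j+1) =>
    if hj : j < n - 1 then
      Dmat hd (pickCA d ⟨0, by omega⟩ (a ⟨j, by omega⟩) (ψ ⟨j, by omega⟩)
          (Kseq d n hd ψ a j)).2 *
        (pickCA d ⟨0, by omega⟩ (a ⟨j, by omega⟩) (ψ ⟨j, by omega⟩)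
          (Kseq d n hd ψ a j)).1 *
        Kseq d n hd ψ a j
    else Kseq d n hd ψ a j

section sums
variable {n : ℕ} {M : Type*} [AddCommGroup M]

lemma sum_if_lt_succ (f : Fin n → M) (j : ℕ) (hj : j < n) :
    (∑ l : Fin n, if l.1 < j + 1 then f l else 0)
      = (∑ l : Fin n, if l.1 < j then f l else 0) + f ⟨j, hj⟩ := by
  have h2 : (∑ l : Fin n, if l = (⟨j, hj⟩ : Fin n) then f l else 0) = f ⟨j, hj⟩ := by
    rw [Finset.sum_ite_eq' Finset.univ]
    simp
  rw [← h2, ← Finset.sum_add_distrib]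
  refine Finset.sum_congr rfl fun l _ => ?_
  simp only [Fin.ext_iff]
  split_ifs <;> first | (exfalso; omega) | simp

lemma sum_sub_sum_lt (f : Fin n → M) (j : ℕ) (hj : j < n) :
    (∑ l : Fin n, f l) - (∑ l : Fin n, if l.1 < j then f l else 0)
      = f ⟨j, hj⟩ + ∑ l : Fin n, (if j < l.1 then f l else 0) := by
  have h2 : (∑ l : Fin n, if l = (⟨j, hj⟩ : Fin n) then f l else 0) = f ⟨j, hj⟩ := by
    rw [Finset.sum_ite_eq' Finset.univ]
    simp
  rw [← h2, ← Finset.sum_add_distrib, ← Finset.sum_sub_distrib]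
  refine Finset.sum_congr rfl fun l _ => ?_
  simp only [Fin.ext_iff]
  split_ifs <;> first | (exfalso; omega) | simp

end sums

lemma Kseq_inv (d n : ℕ) (hd : 2 ≤ d) (ψ : Fin n → Fin d → ℂ)
    (hψ : ∀ i, star (ψ i) ⬝ᵥ ψ i = 1) (a : Fin n → ℝ) (ha : ∀ i, 0 < a i ∧ a i ≤ 1)
    (hsum : ∑ i, ((a i : ℝ) : ℂ) • vecMulVec (ψ i) (star (ψ i)) = 1) :
    ∀ j, j ≤ n - 1 → (Kseq d n hd ψ a j)ᴴ * Kseq d n hd ψ a j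
      = 1 - ∑ l : Fin n, (if l.1 < j then ((a l : ℝ) : ℂ) • vecMulVec (ψ l) (star (ψ l)) else 0) := by
  intro j
  induction j with
  | zero =>
    intro _
    simp [Kseq]
  | succ j IH =>
    intro hj1
    have hj : j < n - 1 := by omega
    have hjn : j < n := by omega
    have IH' := IH (by omega)
    set Kj := Kseq d n hd ψ a j with hKj
    set aP : Fin n → Matrix (Fin d) (Fin d) ℂ :=
      fun l => ((a l : ℝ) : ℂ) • vecMulVec (ψ l) (star (ψ l)) with haP
    -- decomposition  K†K = aP ⟨j⟩ + R
    have hdecomp : Kjᴴ * Kj = ((a ⟨j, hjn⟩ : ℝ) : ℂ) •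
        vecMulVec (ψ ⟨j, hjn⟩) (star (ψ ⟨j, hjn⟩))
        + ∑ l : Fin n, (if j < l.1 then aP l else 0) := by
      rw [IH', ← hsum]
      exact sum_sub_sum_lt aP j hjn
    have hR : ∀ x, 0 ≤ (star x ⬝ᵥ (∑ l : Fin n, (if j < l.1 then aP l else 0)) *ᵥ x).re := by
      intro x
      rw [mulVec_sum', dotProduct_sum', Complex.re_sum]
      refine Finset.sum_nonneg fun l _ => ?_
      by_cases h : j < l.1
      · rw [if_pos h]
        exact aP_form_re_nonneg (a l) (ha l).1.le (ψ l) x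
      · rw [if_neg h]
        simp
    have hex := step Kj (ψ ⟨j, hjn⟩) (hψ _) (a ⟨j, hjn⟩) (ha _).1 _ hR hdecomp
      (⟨0, by omega⟩ : Fin d)
    have hgood := pickCA_spec hex
    obtain ⟨hCU, hα0, hα1, heq⟩ := hgood
    set p := pickCA d ⟨0, by omega⟩ (a ⟨j, hjn⟩) (ψ ⟨j, hjn⟩) Kj with hp
    have hKnext : Kseq d n hd ψ a (j+1) = Dmat hd p.2 * p.1 * Kj := by
      rw [Kseq, dif_pos hj]
    have hCC : (p.1)ᴴ * p.1 = 1 := by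
      have := Matrix.mem_unitaryGroup_iff'.mp hCU
      rwa [Matrix.star_eq_conjTranspose] at this
    have hDtD := DtD hd p.2 (by nlinarith)
    rw [hKnext]
    have e0 : (Dmat hd p.2 * p.1 * Kj)ᴴ * (Dmat hd p.2 * p.1 * Kj)
        = Kjᴴ * (p.1)ᴴ * ((Dmat hd p.2)ᴴ * Dmat hd p.2) * p.1 * Kj := by
      simp only [conjTranspose_mul, Matrix.mul_assoc]
    rw [e0, hDtD]
    have e1 : Kjᴴ * (p.1)ᴴ *
          (1 - ((p.2 ^ 2 : ℝ) : ℂ) • Matrix.single (⟨0, by omega⟩ : Fin d) (⟨0, by omega⟩ : Fin d) (1:ℂ)) *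
          p.1 * Kj
        = Kjᴴ * (p.1)ᴴ * p.1 * Kj
          - ((p.2 ^ 2 : ℝ) : ℂ) • (Kjᴴ * (p.1)ᴴ *
              Matrix.single (⟨0, by omega⟩ : Fin d) (⟨0, by omega⟩ : Fin d) (1:ℂ) * p.1 * Kj) := by
      simp only [Matrix.mul_sub, Matrix.sub_mul, Matrix.mul_one, Matrix.mul_smul,
        Matrix.smul_mul]
    rw [e1]
    have e2 : Kjᴴ * (p.1)ᴴ * p.1 * Kj = Kjᴴ * Kj := by
      rw [Matrix.mul_assoc (Kjᴴ) ((p.1)ᴴ) p.1, hCC, Matrix.mul_one]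
    rw [e2, heq, IH']
    rw [sum_if_lt_succ (f := aP) j hjn]
    rw [sub_sub]




lemma Kseq_ex (d n : ℕ) (hd : 2 ≤ d) (ψ : Fin n → Fin d → ℂ)
    (hψ : ∀ i, star (ψ i) ⬝ᵥ ψ i = 1) (a : Fin n → ℝ) (ha : ∀ i, 0 < a i ∧ a i ≤ 1)
    (hsum : ∑ i, ((a i : ℝ) : ℂ) • vecMulVec (ψ i) (star (ψ i)) = 1)
    (j : ℕ) (hj : j < n - 1) :
    ∃ (C : Matrix (Fin d) (Fin d) ℂ) (α : ℝ), C ∈ Matrix.unitaryGroup (Fin d) ℂ ∧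
      0 ≤ α ∧ α ≤ 1 ∧
      ((α^2 : ℝ) : ℂ) • ((Kseq d n hd ψ a j)ᴴ * Cᴴ *
          Matrix.single (⟨0, by omega⟩ : Fin d) (⟨0, by omega⟩ : Fin d) (1:ℂ) * C *
          Kseq d n hd ψ a j)
        = ((a ⟨j, by omega⟩ : ℝ) : ℂ) •
            vecMulVec (ψ ⟨j, by omega⟩) (star (ψ ⟨j, by omega⟩)) := by
  have hjn : j < n := by omega
  have IH' := Kseq_inv d n hd ψ hψ a ha hsum j (by omega)
  set Kj := Kseq d n hd ψ a j with hKj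
  set aP : Fin n → Matrix (Fin d) (Fin d) ℂ :=
    fun l => ((a l : ℝ) : ℂ) • vecMulVec (ψ l) (star (ψ l)) with haP
  have hdecomp : Kjᴴ * Kj = ((a ⟨j, hjn⟩ : ℝ) : ℂ) •
      vecMulVec (ψ ⟨j, hjn⟩) (star (ψ ⟨j, hjn⟩))
      + ∑ l : Fin n, (if j < l.1 then aP l else 0) := by
    rw [IH', ← hsum]
    exact sum_sub_sum_lt aP j hjn
  have hR : ∀ x, 0 ≤ (star x ⬝ᵥ (∑ l : Fin n, (if j < l.1 then aP l else 0)) *ᵥ x).re := by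
    intro x
    rw [mulVec_sum', dotProduct_sum', Complex.re_sum]
    refine Finset.sum_nonneg fun l _ => ?_
    by_cases h : j < l.1
    · rw [if_pos h]
      exact aP_form_re_nonneg (a l) (ha l).1.le (ψ l) x
    · rw [if_neg h]
      simp
  exact step Kj (ψ ⟨j, hjn⟩) (hψ _) (a ⟨j, hjn⟩) (ha _).1 _ hR hdecomp (⟨0, by omega⟩ : Fin d)

end QW


/-- Any rank-1 POVM with `n` outcomes on a qudit (dimension `d`) can be implemented by a
one-dimensional discrete quantum walk with `2(n-1)` steps: algebraic content.  Here `K` is the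
recursively defined Kraus-type operator sequence, `C l` are the unitary coin operators,
and `α l ∈ [0,1]` the coin parameters. -/
theorem povm_implementation_via_quantum_walk
    (d n : ℕ) (hd : 2 ≤ d) (hn : 1 ≤ n)
    (ψ : Fin n → (Fin d → ℂ))
    (hψ : ∀ i, ∑ j, ‖ψ i j‖ ^ 2 = 1)
    (a : Fin n → ℝ) (ha : ∀ i, 0 < a i ∧ a i ≤ 1)
    (hsum : ∑ i, ((a i : ℝ) : ℂ) • vecMulVec (ψ i) (star (ψ i)) = 1) :
    ∃ (C : Fin (n - 1) → Matrix (Fin d) (Fin d) ℂ) (α : Fin (n - 1) → ℝ),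
      (∀ l, C l ∈ Matrix.unitaryGroup (Fin d) ℂ) ∧
      (∀ l, 0 ≤ α l ∧ α l ≤ 1) ∧
      (∀ K : ℕ → Matrix (Fin d) (Fin d) ℂ,
        K 0 = 1 →
        (∀ l : Fin (n - 1),
          K (l.1 + 1) =
            (Matrix.single (⟨0, by omega⟩ : Fin d) (⟨1, by omega⟩ : Fin d) (1 : ℂ)
              + ((Real.sqrt (1 - α l ^ 2) : ℝ) : ℂ) •
                  Matrix.single (⟨1, by omega⟩ : Fin d) (⟨0, by omega⟩ : Fin d) (1 : ℂ)
              + ∑ k : Fin d, if 2 ≤ k.1 then Matrix.single k k (1 : ℂ) else 0)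
              * C l * K l.1) →
        (∀ j : Fin (n - 1),
          (((α j ^ 2 : ℝ)) : ℂ) •
              ((K j.1)ᴴ * (C j)ᴴ *
                Matrix.single (⟨0, by omega⟩ : Fin d) (⟨0, by omega⟩ : Fin d) (1 : ℂ)
                * C j * K j.1)
            = ((a ⟨j.1, by omega⟩ : ℝ) : ℂ) •
                vecMulVec (ψ ⟨j.1, by omega⟩) (star (ψ ⟨j.1, by omega⟩)) ∧
          (K (j.1 + 1))ᴴ * K (j.1 + 1)
            = 1 - ∑ l : Fin n, (if l.1 ≤ j.1 then
                ((a l : ℝ) : ℂ) • vecMulVec (ψ l) (star (ψ l)) else 0)) ∧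
        (K (n - 1))ᴴ * K (n - 1)
          = ((a ⟨n - 1, by omega⟩ : ℝ) : ℂ) •
              vecMulVec (ψ ⟨n - 1, by omega⟩) (star (ψ ⟨n - 1, by omega⟩))) := by
  classical
  have hψ' : ∀ i, star (ψ i) ⬝ᵥ ψ i = 1 := fun i => by
    rw [QW.star_dot_self, hψ i, Complex.ofReal_one]
  have hinv := QW.Kseq_inv d n hd ψ hψ' a ha hsum
  have hex := fun (j : ℕ) (hj : j < n - 1) => QW.Kseq_ex d n hd ψ hψ' a ha hsum j hj
  refine ⟨fun l => (QW.pickCA d ⟨0, by omega⟩ (a ⟨l.1, lt_of_lt_of_le l.2 (Nat.sub_le n 1)⟩)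
      (ψ ⟨l.1, lt_of_lt_of_le l.2 (Nat.sub_le n 1)⟩) (QW.Kseq d n hd ψ a l.1)).1,
    fun l => (QW.pickCA d ⟨0, by omega⟩ (a ⟨l.1, lt_of_lt_of_le l.2 (Nat.sub_le n 1)⟩)
      (ψ ⟨l.1, lt_of_lt_of_le l.2 (Nat.sub_le n 1)⟩) (QW.Kseq d n hd ψ a l.1)).2,
    fun l => (QW.pickCA_spec (hex l.1 l.2)).1,
    fun l => ⟨(QW.pickCA_spec (hex l.1 l.2)).2.1, (QW.pickCA_spec (hex l.1 l.2)).2.2.1⟩,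
    ?_⟩
  intro K hK0 hrec
  have hKeq : ∀ m, m ≤ n - 1 → K m = QW.Kseq d n hd ψ a m := by
    intro m
    induction m with
    | zero =>
      intro _
      rw [hK0]
      rfl
    | succ m IH =>
      intro hm1
      have hm : m < n - 1 := by omega
      have e := hrec ⟨m, hm⟩
      rw [IH (by omega)] at e
      rw [e]
      have hK1 : QW.Kseq d n hd ψ a (m+1)
          = QW.Dmat hd (QW.pickCA d ⟨0, by omega⟩ (a ⟨m, by omega⟩) (ψ ⟨m, by omega⟩)
              (QW.Kseq d n hd ψ a m)).2 *
            (QW.pickCA d ⟨0, by omega⟩ (a ⟨m, by omega⟩) (ψ ⟨m, by omega⟩)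
              (QW.Kseq d n hd ψ a m)).1 *
            QW.Kseq d n hd ψ a m := by
        rw [QW.Kseq, dif_pos hm]
      rw [hK1]
      rfl
  refine ⟨fun j => ⟨?_, ?_⟩, ?_⟩
  · rw [hKeq j.1 (le_of_lt j.2)]
    exact (QW.pickCA_spec (hex j.1 j.2)).2.2.2
  · have hj2 : j.1 + 1 ≤ n - 1 := j.2
    rw [hKeq (j.1+1) hj2, hinv (j.1+1) hj2]
    simp only [Nat.lt_succ_iff]
  · by_cases hn1 : n = 1
    · subst hn1
      show (K 0)ᴴ * K 0 = _
      rw [hK0, conjTranspose_one, one_mul, ← hsum, Fin.sum_univ_one]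
      exact congrArg (fun i => ((a i : ℝ) : ℂ) • vecMulVec (ψ i) (star (ψ i)))
        (Subsingleton.elim _ _)
    · have hn2 : 2 ≤ n := by omega
      have h2 : (K (n-2+1))ᴴ * K (n-2+1)
          = 1 - ∑ l : Fin n, (if l.1 < n-2+1 then
              ((a l : ℝ) : ℂ) • vecMulVec (ψ l) (star (ψ l)) else 0) := by
        rw [hKeq (n-2+1) (by omega), hinv (n-2+1) (by omega)]
      have hrw : n - 2 + 1 = n - 1 := by omega
      rw [hrw] at h2
      rw [h2, ← hsum, QW.sum_sub_sum_lt
        (fun l => ((a l : ℝ) : ℂ) • vecMulVec (ψ l) (star (ψ l))) (n-1) (by omega)]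
      have hz : (∑ l : Fin n, if n-1 < l.1 then
          ((a l : ℝ) : ℂ) • vecMulVec (ψ l) (star (ψ l)) else 0) = 0 :=
        Finset.sum_eq_zero fun l _ => by
          rw [if_neg (by have := l.isLt; omega)]
      rw [hz, add_zero]
end

section
/- Let K be a d×d complex matrix, let ψ ∈ ℂ^d be a unit vector, and let a > 0 be a real number such that a·|ψ⟩⟨ψ| ≤ K† K in the Loewner order. Then there exists χ ∈ ℂ^d with K† χ = ψ and a·‖χ‖² ≤ 1. (This guarantees that the coin-operator parameter α′ = √a·‖K^{†+}ψ‖ of the quantum-walk algorithm satisfies α′ ≤ 1, so the coin operator is well defined.) -/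
open Matrix
open scoped ComplexOrder

/-- If `a|ψ⟩⟨ψ| ≤ K†K` in the Loewner order with `a > 0` and `ψ` a unit vector, then there is a
preimage `χ` of `ψ` under `K†` with `a‖χ‖² ≤ 1`; hence the coin parameter
`α' = √a · ‖K^{†+}ψ‖` satisfies `α' ≤ 1`. -/
theorem coin_parameter_well_defined
    (d : ℕ) (K : Matrix (Fin d) (Fin d) ℂ)
    (ψ : Fin d → ℂ) (hψ : ∑ j, ‖ψ j‖ ^ 2 = 1)
    (a : ℝ) (ha : 0 < a)
    (h : (Kᴴ * K - ((a : ℝ) : ℂ) • vecMulVec ψ (star ψ)).PosSemidef) :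
    ∃ χ : Fin d → ℂ, Kᴴ.mulVec χ = ψ ∧ a * (∑ j, ‖χ j‖ ^ 2) ≤ 1 := by
  set A : Matrix (Fin d) (Fin d) ℂ := Kᴴ * K with hAdef
  have hA : A.IsHermitian := by
    simpa [hAdef] using isHermitian_mul_conjTranspose_self Kᴴ
  -- key inequality
  have hkey : ∀ x : Fin d → ℂ,
      (a : ℂ) * ((star x ⬝ᵥ ψ) * (star ψ ⬝ᵥ x)) ≤ star x ⬝ᵥ A.mulVec x := by
    intro x
    have h0 := h.dotProduct_mulVec_nonneg x
    rw [sub_mulVec, dotProduct_sub, smul_mulVec, dotProduct_smul] at h0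
    have hvv : star x ⬝ᵥ (vecMulVec ψ (star ψ)).mulVec x
        = (star x ⬝ᵥ ψ) * (star ψ ⬝ᵥ x) := by
      simp [mulVec, vecMulVec_apply, dotProduct, Finset.mul_sum, Finset.sum_mul, mul_assoc]
      rw [Finset.sum_comm]
    rw [hvv] at h0
    have := sub_nonneg.mp h0
    simpa [smul_eq_mul] using this
  -- rank-nullity decomposition
  have htop : LinearMap.range A.mulVecLin ⊔ LinearMap.ker A.mulVecLin = ⊤ := by
    have hdisj : LinearMap.range A.mulVecLin ⊓ LinearMap.ker A.mulVecLin = ⊥ := by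
      rw [Submodule.eq_bot_iff]
      rintro x ⟨⟨y, rfl⟩, hx⟩
      have hx' : A.mulVec (A.mulVec y) = 0 := hx
      have : star (A.mulVecLin y) ⬝ᵥ (A.mulVecLin y) = 0 := by
        show star (A.mulVec y) ⬝ᵥ (A.mulVec y) = 0
        rw [star_mulVec, dotProduct_mulVec, vecMul_vecMul, ← dotProduct_mulVec,
          hA.eq, ← mulVec_mulVec, hx', dotProduct_zero]
      exact dotProduct_star_self_eq_zero.mp this
    apply Submodule.eq_top_of_finrank_eq
    have h1 := LinearMap.finrank_range_add_finrank_ker A.mulVecLin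
    have h2 := Submodule.finrank_sup_add_finrank_inf_eq (LinearMap.range A.mulVecLin)
      (LinearMap.ker A.mulVecLin)
    rw [hdisj] at h2
    simp at h2 h1 ⊢
    omega
  -- decompose ψ
  have hψmem : ψ ∈ LinearMap.range A.mulVecLin ⊔ LinearMap.ker A.mulVecLin := by
    rw [htop]; trivial
  obtain ⟨p, hp, w, hw, hpw⟩ := Submodule.mem_sup.mp hψmem
  obtain ⟨v, rfl⟩ := hp
  have hw0 : A.mulVec w = 0 := hw
  -- show w = 0
  have hcw : star ψ ⬝ᵥ w = 0 := by
    have h1 := hkey w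
    rw [hw0, dotProduct_zero] at h1
    have hconj : star w ⬝ᵥ ψ = star (star ψ ⬝ᵥ w) := by rw [star_dotProduct]
    set c := star ψ ⬝ᵥ w with hc
    rw [hconj] at h1
    have h2 : (a : ℂ) * (star c * c) ≤ 0 := h1
    have h3 : a * Complex.normSq c ≤ 0 := by
      have := Complex.le_def.mp h2
      simpa [Complex.normSq_eq_conj_mul_self, Complex.normSq_apply] using this.1
    have : Complex.normSq c ≤ 0 := nonpos_of_mul_nonpos_right h3 ha
    have : Complex.normSq c = 0 := le_antisymm this (Complex.normSq_nonneg c)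
    exact Complex.normSq_eq_zero.mp this
  have hwz : w = 0 := by
    apply dotProduct_star_self_eq_zero.mp
    have hwψ : star w ⬝ᵥ ψ = 0 := by
      rw [star_dotProduct, hcw, star_zero]
    have hwAv : star w ⬝ᵥ A.mulVec v = 0 := by
      rw [dotProduct_mulVec]
      have hz : star w ᵥ* A = 0 := by
        rw [← hA.eq, ← star_mulVec, hw0, star_zero]
      rw [hz, zero_dotProduct]
    have hsum : star w ⬝ᵥ ψ = star w ⬝ᵥ A.mulVec v + star w ⬝ᵥ w := by
      rw [← hpw, dotProduct_add]
      rfl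
    rw [hwψ, hwAv, zero_add] at hsum
    exact hsum.symm
  have hψeq : A.mulVec v = ψ := by
    rw [← hpw, hwz, add_zero]; rfl
  -- the witness
  refine ⟨K.mulVec v, ?_, ?_⟩
  · rw [mulVec_mulVec, ← hAdef, hψeq]
  · set χ := K.mulVec v with hχ
    set S : ℝ := ∑ j, ‖χ j‖ ^ 2 with hS
    have hSnn : 0 ≤ S := Finset.sum_nonneg fun j _ => by positivity
    have hsχ : star χ ⬝ᵥ χ = (S : ℂ) := by
      have hz : ∀ z : ℂ, star z * z = ((‖z‖ ^ 2 : ℝ) : ℂ) := fun z => by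
        show (starRingEnd ℂ) z * z = _
        rw [Complex.conj_mul']
        push_cast
        simp [Complex.normSq_eq_norm_sq]
      rw [hS]
      push_cast
      simp only [dotProduct, Pi.star_apply, hz]
      push_cast
      rfl
    have hsv : star v ⬝ᵥ ψ = (S : ℂ) := by
      rw [← hsχ, hχ, star_mulVec, dotProduct_mulVec, vecMul_vecMul, ← dotProduct_mulVec,
        ← hAdef, hψeq]
    have hvψ : star ψ ⬝ᵥ v = (S : ℂ) := by
      rw [star_dotProduct, hsv]
      simp
    have h1 := hkey v
    rw [hψeq, hsv, hvψ] at h1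
    have h2 : a * (S * S) ≤ S := by
      have := (Complex.le_def.mp h1).1
      simpa using this
    rcases eq_or_lt_of_le hSnn with hS0 | hSpos
    · rw [← hS0, mul_zero]; norm_num
    · nlinarith
end

section
/- Let A and B be positive semidefinite d×d complex matrices such that B has rank 1 and the range of B is contained in the range of A. Then the set S = {a : ℝ | A − a·B is positive semidefinite} is nonempty and bounded above, its supremum a_max belongs to S (i.e., A − a_max·B is positive semidefinite), and rank(A − a_max·B) = rank(A) − 1. -/
open Matrix
open scoped ComplexOrder

lemma psd_rank_one_outer {d : ℕ} {B : Matrix (Fin d) (Fin d) ℂ} (hB : B.PosSemidef)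
    (hrank : B.rank = 1) :
    ∃ v : Fin d → ℂ, star v ⬝ᵥ v ≠ 0 ∧ ∀ x, B *ᵥ x = (star v ⬝ᵥ x) • v := by
  have hH := hB.1
  have hcard : Fintype.card {i // hH.eigenvalues i ≠ 0} = 1 := by
    rw [← hH.rank_eq_card_non_zero_eigs, hrank]
  obtain ⟨⟨i₀, hi₀⟩⟩ := Fintype.card_pos_iff.mp
    (by omega : 0 < Fintype.card {i // hH.eigenvalues i ≠ 0})
  have huniq : ∀ k, k ≠ i₀ → hH.eigenvalues k = 0 := by
    intro k hk
    by_contra hk0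
    have := Fintype.card_le_one_iff.mp (le_of_eq hcard) ⟨k, hk0⟩ ⟨i₀, hi₀⟩
    exact hk (congrArg Subtype.val this)
  set μ : ℝ := hH.eigenvalues i₀ with hμdef
  have hμpos : 0 < μ := lt_of_le_of_ne (hB.eigenvalues_nonneg i₀) (Ne.symm hi₀)
  set U : Matrix (Fin d) (Fin d) ℂ := (hH.eigenvectorUnitary : Matrix (Fin d) (Fin d) ℂ) with hUdef
  set w : Fin d → ℂ := fun i => U i i₀ with hwdef
  have hentry : ∀ i j, B i j = (μ : ℂ) * (w i * star (w j)) := by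
    intro i j
    conv_lhs => rw [hH.spectral_theorem]
    rw [Unitary.conjStarAlgAut_apply, Matrix.mul_apply]
    rw [Finset.sum_eq_single i₀]
    · simp only [Matrix.mul_apply]
      rw [Finset.sum_eq_single i₀]
      · simp only [Matrix.diagonal_apply_eq, Function.comp_apply, hwdef, hUdef, star_apply,
          Matrix.conjTranspose_apply, Matrix.IsHermitian.eigenvectorUnitary_apply]
        rw [hμdef]; exact (mul_assoc _ _ _).trans (mul_left_comm _ _ _)
      · intro k _ hk
        simp [Matrix.diagonal_apply_ne _ hk, huniq k hk]
      · intro h; exact absurd (Finset.mem_univ i₀) h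
    · intro k _ hk
      rw [Matrix.mul_apply, Finset.sum_eq_zero, zero_mul]
      intro l _
      rcases eq_or_ne l k with rfl | hl
      · simp [Matrix.diagonal_apply_eq, huniq l hk]
      · exact mul_eq_zero_of_right _ (Matrix.diagonal_apply_ne _ hl)
    · intro h; exact absurd (Finset.mem_univ i₀) h
  -- the vector
  refine ⟨(Real.sqrt μ : ℂ) • w, ?_, ?_⟩
  · have hw1 : star w ⬝ᵥ w = 1 := by
      have h1 : (star U * U) i₀ i₀ = 1 := by
        have : star U * U = 1 := by
          simpa [hUdef] using (Unitary.coe_star_mul_self hH.eigenvectorUnitary)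
        rw [this, Matrix.one_apply_eq]
      rw [← h1, Matrix.mul_apply, dotProduct]
      simp [Matrix.star_apply, hwdef]
    have : star ((Real.sqrt μ : ℂ) • w) ⬝ᵥ ((Real.sqrt μ : ℂ) • w)
        = (μ : ℂ) := by
      rw [star_smul, smul_dotProduct, dotProduct_smul, hw1]
      simp [← Complex.ofReal_mul, Real.mul_self_sqrt hμpos.le]
    rw [this]
    exact_mod_cast hμpos.ne'
  · intro x
    funext i
    rw [Matrix.mulVec, dotProduct]
    simp only [hentry, Pi.smul_apply, dotProduct, Pi.star_apply, smul_eq_mul,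
      Pi.smul_apply, smul_eq_mul]
    have hq : (Real.sqrt μ : ℂ) * (Real.sqrt μ : ℂ) = (μ : ℂ) := by
      rw [← Complex.ofReal_mul, Real.mul_self_sqrt hμpos.le]
    rw [Finset.sum_mul]
    refine Finset.sum_congr rfl fun j _ => ?_
    simp only [star_mul', RCLike.star_def, Complex.conj_ofReal]
    linear_combination (-(w i * (starRingEnd ℂ) (w j) * x j)) * hq

/-- Lemma 1 (existence part): for `A, B` PSD with `B` of rank 1 and `range B ⊆ range A`, the set
`S = {a : ℝ | A - a·B` is PSD`}` is nonempty and bounded above, its supremum `a_max` belongs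
to `S`, and `rank (A - a_max·B) = rank A - 1`. -/
theorem loewner_rank_lemma_sup
    (d : ℕ) (A B : Matrix (Fin d) (Fin d) ℂ)
    (hA : A.PosSemidef) (hB : B.PosSemidef) (hrankB : B.rank = 1)
    (hrange : LinearMap.range B.mulVecLin ≤ LinearMap.range A.mulVecLin) :
    {a : ℝ | (A - ((a : ℝ) : ℂ) • B).PosSemidef}.Nonempty ∧
    BddAbove {a : ℝ | (A - ((a : ℝ) : ℂ) • B).PosSemidef} ∧
    (A - ((sSup {a : ℝ | (A - ((a : ℝ) : ℂ) • B).PosSemidef} : ℝ) : ℂ) • B).PosSemidef ∧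
    (A - ((sSup {a : ℝ | (A - ((a : ℝ) : ℂ) • B).PosSemidef} : ℝ) : ℂ) • B).rank
      = A.rank - 1 := by
  classical
  obtain ⟨v, hv0, hBx⟩ := psd_rank_one_outer hB hrankB
  have hvne : v ≠ 0 := fun h => hv0 (by simp [h])
  -- v is in the range of A
  have hvmem : v ∈ LinearMap.range A.mulVecLin := by
    apply hrange
    refine ⟨(star v ⬝ᵥ v)⁻¹ • v, ?_⟩
    rw [mulVecLin_apply, mulVec_smul, hBx, smul_smul, inv_mul_cancel₀ hv0, one_smul]
  obtain ⟨u, hu⟩ := hvmem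
  rw [mulVecLin_apply] at hu
  -- the positive real constant r = ⟨u, A u⟩ = ⟨u, v⟩
  have hc_nonneg : (0:ℂ) ≤ star u ⬝ᵥ v := by rw [← hu]; exact hA.dotProduct_mulVec_nonneg u
  obtain ⟨hre, him⟩ := Complex.nonneg_iff.mp hc_nonneg
  set r : ℝ := (star u ⬝ᵥ v).re with hrdef
  have hcr : star u ⬝ᵥ v = (r : ℂ) := Complex.ext rfl him.symm
  have hr0 : r ≠ 0 := by
    intro h
    have h1 : star u ⬝ᵥ A *ᵥ u = 0 := by rw [hu, hcr, h, Complex.ofReal_zero]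
    have h2 := (hA.dotProduct_mulVec_zero_iff u).mp h1
    rw [h2] at hu
    exact hvne hu.symm
  have hrpos : 0 < r := lt_of_le_of_ne hre (Ne.symm hr0)
  -- ⟨v, u⟩ = r as well
  have hvu : star v ⬝ᵥ u = (r : ℂ) := by
    rw [star_dotProduct, hcr]
    simp
  -- transfer: ⟨v, x⟩ = ⟨u, A x⟩
  have hbeta : ∀ x, star v ⬝ᵥ x = star u ⬝ᵥ A *ᵥ x := by
    intro x
    rw [← hu, star_mulVec, hA.1, ← dotProduct_mulVec]
  -- quadratic form of A is real
  have hq : ∀ x, star x ⬝ᵥ A *ᵥ x = ((star x ⬝ᵥ A *ᵥ x).re : ℂ) :=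
    fun x => Complex.ext rfl (Complex.nonneg_iff.mp (hA.dotProduct_mulVec_nonneg x)).2.symm
  -- Cauchy–Schwarz
  have hCS : ∀ x, Complex.normSq (star v ⬝ᵥ x) ≤ r * (star x ⬝ᵥ A *ᵥ x).re := by
    intro x
    set β : ℂ := star v ⬝ᵥ x with hβ
    have h0 := hA.dotProduct_mulVec_nonneg ((r : ℂ) • x - β • u)
    have hexp : star ((r : ℂ) • x - β • u) ⬝ᵥ A *ᵥ ((r : ℂ) • x - β • u)
        = ((r^2 * (star x ⬝ᵥ A *ᵥ x).re - r * Complex.normSq β : ℝ) : ℂ) := by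
      have h1 : star x ⬝ᵥ v = star β := by rw [hβ, star_dotProduct]
      simp only [star_sub, star_smul, mulVec_sub, mulVec_smul, sub_dotProduct, dotProduct_sub,
        smul_dotProduct, dotProduct_smul, smul_eq_mul, RCLike.star_def, Complex.conj_ofReal]
      rw [hu, ← hbeta x, ← hβ, hq x, h1, hcr]
      simp only [RCLike.star_def]
      have e1 : β * (starRingEnd ℂ) β = (Complex.normSq β : ℂ) := Complex.mul_conj β
      have e2 : (starRingEnd ℂ) β * β = (Complex.normSq β : ℂ) := by
        rw [mul_comm]; exact Complex.mul_conj β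
      push_cast
      simp only [Complex.ofReal_re]
      linear_combination (-(Complex.ofReal r)) * e2
    rw [hexp] at h0
    have := (Complex.nonneg_iff.mp h0).1
    simp only [Complex.ofReal_re] at this
    nlinarith [hrpos]
  -- quadratic form of A - a B
  have hform : ∀ (a : ℝ) (x : Fin d → ℂ), star x ⬝ᵥ (A - ((a : ℝ) : ℂ) • B) *ᵥ x
      = (((star x ⬝ᵥ A *ᵥ x).re - a * Complex.normSq (star v ⬝ᵥ x) : ℝ) : ℂ) := by
    intro a x
    have h1 : star x ⬝ᵥ v = star (star v ⬝ᵥ x) := by rw [star_dotProduct]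
    rw [sub_mulVec, smul_mulVec, hBx, dotProduct_sub, dotProduct_smul, dotProduct_smul,
      h1, hq x]
    simp only [smul_eq_mul, RCLike.star_def]
    rw [Complex.mul_conj]
    push_cast
    simp only [Complex.ofReal_re]
  -- Hermitian part
  have hHerm : ∀ a : ℝ, (A - ((a : ℝ) : ℂ) • B).IsHermitian := by
    intro a
    show (A - ((a : ℝ) : ℂ) • B)ᴴ = _
    rw [conjTranspose_sub, conjTranspose_smul, hA.1, hB.1, RCLike.star_def, Complex.conj_ofReal]
  -- characterization of the set S
  have hmem : ∀ a : ℝ, (A - ((a : ℝ) : ℂ) • B).PosSemidef ↔ a ≤ r⁻¹ := by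
    intro a
    constructor
    · intro h
      have h2 := h.dotProduct_mulVec_nonneg u
      rw [hform a u] at h2
      have e1 : (star u ⬝ᵥ A *ᵥ u).re = r := by rw [hu, hcr, Complex.ofReal_re]
      have e2 : Complex.normSq (star v ⬝ᵥ u) = r^2 := by
        rw [hvu, Complex.normSq_ofReal, sq]
      rw [e1, e2] at h2
      have h3 := (Complex.nonneg_iff.mp h2).1
      simp only [Complex.ofReal_re] at h3
      rw [← one_div, le_div_iff₀ hrpos]
      nlinarith
    · intro ha
      refine PosSemidef.of_dotProduct_mulVec_nonneg (hHerm a) fun x => ?_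
      rw [hform a x]
      have h3 := hCS x
      have hn : 0 ≤ Complex.normSq (star v ⬝ᵥ x) := Complex.normSq_nonneg _
      have h4 : (0:ℝ) ≤ (star x ⬝ᵥ A *ᵥ x).re - a * Complex.normSq (star v ⬝ᵥ x) := by
        have h5 := mul_le_mul_of_nonneg_right ha hn
        have h6 := mul_le_mul_of_nonneg_left h3 (inv_nonneg.mpr hrpos.le)
        have h7 : r⁻¹ * (r * (star x ⬝ᵥ A *ᵥ x).re) = (star x ⬝ᵥ A *ᵥ x).re := by
          field_simp
        nlinarith
      exact Complex.zero_le_real.mpr h4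
  have hSeq : {a : ℝ | (A - ((a : ℝ) : ℂ) • B).PosSemidef} = Set.Iic r⁻¹ :=
    Set.ext fun a => hmem a
  rw [hSeq, csSup_Iic]
  refine ⟨⟨r⁻¹, Set.mem_Iic.mpr le_rfl⟩, bddAbove_Iic, (hmem r⁻¹).mpr le_rfl, ?_⟩
  -- rank part
  set M : Matrix (Fin d) (Fin d) ℂ := A - ((r⁻¹ : ℝ) : ℂ) • B with hMdef
  have hMu : M *ᵥ u = 0 := by
    rw [hMdef, sub_mulVec, smul_mulVec, hBx, hvu, hu, smul_smul, ← Complex.ofReal_mul,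
      inv_mul_cancel₀ hr0, Complex.ofReal_one, one_smul, sub_self]
  have hker : LinearMap.ker M.mulVecLin
      = LinearMap.ker A.mulVecLin ⊔ Submodule.span ℂ {u} := by
    apply le_antisymm
    · intro x hx
      rw [LinearMap.mem_ker, mulVecLin_apply] at hx
      have hAx : A *ᵥ x = A *ᵥ (((((r:ℝ)⁻¹ : ℝ) : ℂ) * (star v ⬝ᵥ x)) • u) := by
        rw [hMdef, sub_mulVec, smul_mulVec, hBx, sub_eq_zero] at hx
        rw [mulVec_smul, hu, hx, smul_smul]
      refine Submodule.mem_sup.mpr ⟨x - (((((r:ℝ)⁻¹ : ℝ) : ℂ) * (star v ⬝ᵥ x)) • u), ?_,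
        ((((r:ℝ)⁻¹ : ℝ) : ℂ) * (star v ⬝ᵥ x)) • u, ?_, sub_add_cancel _ _⟩
      · rw [LinearMap.mem_ker, mulVecLin_apply, mulVec_sub, hAx, sub_self]
      · exact Submodule.smul_mem _ _ (Submodule.mem_span_singleton_self u)
    · rw [sup_le_iff]
      constructor
      · intro x hx
        rw [LinearMap.mem_ker, mulVecLin_apply] at hx ⊢
        rw [hMdef, sub_mulVec, smul_mulVec, hBx, hbeta x, hx, dotProduct_zero, zero_smul,
          smul_zero, sub_zero]
      · rw [Submodule.span_singleton_le_iff_mem, LinearMap.mem_ker, mulVecLin_apply]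
        exact hMu
  have hune : u ≠ 0 := by
    rintro rfl; rw [mulVec_zero] at hu; exact hvne hu.symm
  have hunk : u ∉ LinearMap.ker A.mulVecLin := by
    rw [LinearMap.mem_ker, mulVecLin_apply, hu]
    exact hvne
  have hdisj : Disjoint (LinearMap.ker A.mulVecLin) (Submodule.span ℂ {u}) :=
    Submodule.disjoint_span_singleton.mpr fun h => absurd h hunk
  have hfin : Module.finrank ℂ (LinearMap.ker M.mulVecLin)
      = Module.finrank ℂ (LinearMap.ker A.mulVecLin) + 1 := by
    rw [hker]
    have h8 := Submodule.finrank_sup_add_finrank_inf_eq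
      (LinearMap.ker A.mulVecLin) (Submodule.span ℂ {u})
    rw [disjoint_iff.mp hdisj, finrank_bot, add_zero, finrank_span_singleton hune] at h8
    exact h8
  have hr1 := LinearMap.finrank_range_add_finrank_ker M.mulVecLin
  have hr2 := LinearMap.finrank_range_add_finrank_ker A.mulVecLin
  rw [Module.finrank_fin_fun] at hr1 hr2
  have hrk1 : M.rank = Module.finrank ℂ (LinearMap.range M.mulVecLin) := rfl
  have hrk2 : A.rank = Module.finrank ℂ (LinearMap.range A.mulVecLin) := rfl
  rw [hrk1, hrk2]
  omega
end

section
/- Let A and B be positive semidefinite d×d complex matrices such that B has rank 1 and the range of B is contained in the range of A, and let a_max be the supremum of the set {a : ℝ | A − a·B is positive semidefinite}. Then for every complex number a with a ≠ a_max (regarding a_max as a complex number), rank(A − a·B) = rank(A). -/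
open Matrix
open scoped ComplexOrder

lemma herm_dot {d : ℕ} {A : Matrix (Fin d) (Fin d) ℂ} (hA : A.IsHermitian)
    (x w : Fin d → ℂ) : star (A *ᵥ x) ⬝ᵥ w = star x ⬝ᵥ (A *ᵥ w) := by
  rw [star_mulVec, hA.eq, ← dotProduct_mulVec]

lemma real_of_nonneg {z : ℂ} (h : 0 ≤ z) : z = (z.re : ℂ) := by
  have h2 := (Complex.le_def.mp h).2
  exact Complex.ext (by simp) (by simpa using h2.symm)

lemma aux_decomp (d : ℕ) (B : Matrix (Fin d) (Fin d) ℂ) (hB : B.PosSemidef)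
    (hrankB : B.rank = 1) :
    ∃ v : Fin d → ℂ, v ≠ 0 ∧ ∀ x, B *ᵥ x = (star v ⬝ᵥ x) • v := by
  have h1 : Module.finrank ℂ ↥(LinearMap.range B.mulVecLin) = 1 := hrankB
  obtain ⟨v₀, hv₀0, hall⟩ := finrank_eq_one_iff'.mp h1
  have hv0 : (v₀ : Fin d → ℂ) ≠ 0 := fun h => hv₀0 (Submodule.coe_eq_zero.mp h)
  set v : Fin d → ℂ := (v₀ : Fin d → ℂ) with hvdef
  have hf : ∀ x, ∃ c : ℂ, B *ᵥ x = c • v := by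
    intro x
    obtain ⟨c, hc⟩ := hall ⟨B *ᵥ x, ⟨x, by rw [mulVecLin_apply]⟩⟩
    exact ⟨c, by simpa using (congrArg Subtype.val hc).symm⟩
  choose f hf using hf
  have hfv : f v ≠ 0 := by
    intro h0
    have hB2 : ∀ x, B *ᵥ (B *ᵥ x) = 0 := fun x => by
      rw [hf x, mulVec_smul, hf v, h0, zero_smul, smul_zero]
    have hfx : ∀ x, f x = 0 := by
      intro x
      have h1 : star (B *ᵥ x) ⬝ᵥ (B *ᵥ x) = 0 := by
        rw [herm_dot hB.1, hB2, dotProduct_zero]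
      rw [dotProduct_star_self_eq_zero] at h1
      have h2 := hf x
      rw [h1] at h2
      exact (smul_eq_zero.mp h2.symm).resolve_right hv0
    have hB0 : B = 0 := by
      ext i j
      have h3 : B *ᵥ Pi.single j 1 = 0 := by rw [hf (Pi.single j 1), hfx, zero_smul]
      have := congrFun h3 i
      simpa [mulVec_single] using this
    rw [hB0] at hrankB
    simp at hrankB
  have hn0 : (0:ℂ) ≤ star v ⬝ᵥ v := dotProduct_star_self_nonneg v
  obtain ⟨nr, hnr⟩ : ∃ r : ℝ, star v ⬝ᵥ v = (r:ℂ) := ⟨_, real_of_nonneg hn0⟩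
  have hnrpos : 0 < nr := by
    have hne : star v ⬝ᵥ v ≠ 0 := fun h => hv0 (dotProduct_star_self_eq_zero.mp h)
    rcases (Complex.zero_le_real.mp (hnr ▸ hn0)).lt_or_eq with h | h
    · exact h
    · exact absurd (by rw [hnr, ← h]; norm_num) hne
  have hnrC : ((nr:ℝ):ℂ) ≠ 0 := by exact_mod_cast hnrpos.ne'
  have hfvn : star v ⬝ᵥ (B *ᵥ v) = f v * (nr:ℂ) := by
    rw [hf v, dotProduct_smul, smul_eq_mul, hnr]
  have hpos : (0:ℂ) ≤ f v * (nr:ℂ) := hfvn ▸ hB.dotProduct_mulVec_nonneg v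
  obtain ⟨l, hl⟩ : ∃ r : ℝ, f v * (nr:ℂ) = (r:ℂ) := ⟨_, real_of_nonneg hpos⟩
  have hfveq : f v = ((l / nr : ℝ):ℂ) := by
    push_cast
    rw [eq_div_iff hnrC]
    exact hl
  have hlpos : 0 < l := by
    rcases (Complex.zero_le_real.mp (hl ▸ hpos)).lt_or_eq with h | h
    · exact h
    · exact absurd (by rw [hfveq, ← h]; norm_num) hfv
  have hfx : ∀ x, f x * (nr:ℂ) = f v * (star v ⬝ᵥ x) := by
    intro x
    have h1 : star v ⬝ᵥ (B *ᵥ x) = f x * (nr:ℂ) := by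
      rw [hf x, dotProduct_smul, smul_eq_mul, hnr]
    have h2 : star (B *ᵥ v) ⬝ᵥ x = f x * (nr:ℂ) := by rw [herm_dot hB.1, h1]
    calc f x * (nr:ℂ) = star (B *ᵥ v) ⬝ᵥ x := h2.symm
      _ = star (f v) * (star v ⬝ᵥ x) := by
          rw [hf v, star_smul, smul_dotProduct, smul_eq_mul]
      _ = f v * (star v ⬝ᵥ x) := by
          rw [hfveq]
          simp [Complex.star_def, Complex.conj_ofReal]
  set μ : ℝ := l / (nr * nr) with hμdef
  have hμpos : 0 < μ := by positivity
  have hfxval : ∀ x, f x = (μ:ℂ) * (star v ⬝ᵥ x) := by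
    intro x
    have h := hfx x
    rw [hfveq] at h
    rw [hμdef]
    push_cast at h ⊢
    rw [div_mul_eq_mul_div, eq_div_iff hnrC] at h
    rw [div_mul_eq_mul_div, eq_comm, div_eq_iff (mul_ne_zero hnrC hnrC)]
    linear_combination -h
  refine ⟨((Real.sqrt μ : ℝ) : ℂ) • v, ?_, ?_⟩
  · exact smul_ne_zero (by exact_mod_cast (Real.sqrt_pos.mpr hμpos).ne') hv0
  · intro x
    rw [hf x]
    have hstar : star (((Real.sqrt μ : ℝ) : ℂ) • v) = ((Real.sqrt μ : ℝ) : ℂ) • star v := by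
      rw [star_smul]; congr 1; simp [Complex.star_def, Complex.conj_ofReal]
    rw [hstar, smul_dotProduct, smul_eq_mul, smul_smul]
    have hsq : ((Real.sqrt μ : ℝ) : ℂ) * ((Real.sqrt μ : ℝ) : ℂ) = (μ : ℂ) := by
      rw [← Complex.ofReal_mul, Real.mul_self_sqrt hμpos.le]
    rw [hfxval x]
    congr 1
    linear_combination (-(star v ⬝ᵥ x)) * hsq

theorem main_test
    (d : ℕ) (A B : Matrix (Fin d) (Fin d) ℂ)
    (hA : A.PosSemidef) (hB : B.PosSemidef)
    (hrange : LinearMap.range B.mulVecLin ≤ LinearMap.range A.mulVecLin)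
    (v : Fin d → ℂ) (hv0 : v ≠ 0) (hBdec : ∀ x, B *ᵥ x = (star v ⬝ᵥ x) • v) :
    ∀ a : ℂ,
      a ≠ ((sSup {a' : ℝ | (A - ((a' : ℝ) : ℂ) • B).PosSemidef} : ℝ) : ℂ) →
      (A - a • B).rank = A.rank := by
  intro a ha
  have hker : LinearMap.ker (A - a • B).mulVecLin = LinearMap.ker A.mulVecLin := by
    apply le_antisymm
    · intro x hx
      rw [LinearMap.mem_ker, mulVecLin_apply] at hx ⊢
      have hAx : A *ᵥ x = a • (B *ᵥ x) := by
        rw [sub_mulVec, smul_mulVec, sub_eq_zero] at hx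
        exact hx
      by_cases hc : star v ⬝ᵥ x = 0
      · rw [hBdec x, hc, zero_smul, smul_zero] at hAx
        exact hAx
      · exfalso
        apply ha
        set c := star v ⬝ᵥ x with hcdef
        have hAx' : A *ᵥ x = (a * c) • v := by rw [hAx, hBdec x, smul_smul]
        have key : ∀ w, star x ⬝ᵥ (A *ᵥ w) = (star a * star c) * (star v ⬝ᵥ w) := by
          intro w
          rw [← herm_dot hA.1, hAx', star_smul, smul_dotProduct, smul_eq_mul, star_mul']
        have hxv : star x ⬝ᵥ v = star c := by
          rw [hcdef, star_dotProduct]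
        have hq0 : (0:ℂ) ≤ star x ⬝ᵥ (A *ᵥ x) := hA.dotProduct_mulVec_nonneg x
        have hqval : star x ⬝ᵥ (A *ᵥ x) = a * (c * star c) := by
          rw [hAx', dotProduct_smul, smul_eq_mul, hxv]
          ring
        set m : ℝ := Complex.normSq c with hmdef
        have hmc : (m : ℂ) = c * star c := by
          rw [hmdef]
          rw [← Complex.mul_conj]
          rfl
        have hmpos : 0 < m := Complex.normSq_pos.mpr hc
        have hmC : (m:ℂ) ≠ 0 := by exact_mod_cast hmpos.ne'
        -- a is real
        set q : ℂ := star x ⬝ᵥ (A *ᵥ x) with hqdef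
        have hq : q = a * (m:ℂ) := by rw [hqval, hmc]
        set r : ℝ := q.re / m with hrdef
        have har : a = (r:ℝ) := by
          have h1 : q = (q.re : ℂ) := real_of_nonneg hq0
          rw [hrdef]
          push_cast
          rw [eq_div_iff hmC, ← h1, hq]
        -- membership: A - r B is PSD
        have hmem : (A - ((r:ℝ):ℂ) • B).PosSemidef := by
          rw [posSemidef_iff_dotProduct_mulVec]
          constructor
          · show (A - ((r:ℝ):ℂ) • B)ᴴ = _
            rw [conjTranspose_sub, conjTranspose_smul, hA.1.eq, hB.1.eq]
            congr 1
            simp [Complex.star_def, Complex.conj_ofReal]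
          · intro y
            set p : ℂ := star v ⬝ᵥ y with hpdef
            set t : ℂ := p / c with htdef
            set z : Fin d → ℂ := y - t • x with hzdef
            have hvz : star v ⬝ᵥ z = 0 := by
              rw [hzdef, dotProduct_sub, dotProduct_smul, smul_eq_mul, ← hcdef, ← hpdef,
                htdef, div_mul_cancel₀ _ hc, sub_self]
            have hzv : star z ⬝ᵥ v = 0 := by
              rw [star_dotProduct, hvz, star_zero]
            have h1 : star z ⬝ᵥ (A *ᵥ z) = star z ⬝ᵥ (A *ᵥ y) := by
              have hAz : A *ᵥ z = A *ᵥ y - (t * (a * c)) • v := by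
                rw [hzdef, mulVec_sub, mulVec_smul, hAx', smul_smul]
              rw [hAz, dotProduct_sub, dotProduct_smul, smul_eq_mul, hzv, mul_zero, sub_zero]
            have h2 : star z ⬝ᵥ (A *ᵥ y) =
                star y ⬝ᵥ (A *ᵥ y) - star t * ((star a * star c) * p) := by
              rw [hzdef, star_sub, star_smul, sub_dotProduct, smul_dotProduct, smul_eq_mul,
                key y, ← hpdef]
            have hyv : star y ⬝ᵥ v = star p := by
              rw [hpdef, star_dotProduct]
            have hBy : star y ⬝ᵥ (B *ᵥ y) = p * star p := by
              rw [hBdec y, dotProduct_smul, smul_eq_mul, ← hpdef, hyv]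
            have h3 : star y ⬝ᵥ ((A - ((r:ℝ):ℂ) • B) *ᵥ y) = star z ⬝ᵥ (A *ᵥ z) := by
              rw [sub_mulVec, smul_mulVec, dotProduct_sub, dotProduct_smul, smul_eq_mul,
                hBy, h1, h2]
              have hst : star t = star p / star c := by
                rw [htdef, star_div₀]
              have hsa : star a = ((r:ℝ):ℂ) := by
                rw [har]
                simp [Complex.star_def, Complex.conj_ofReal]
              have hcs : star c ≠ 0 := star_ne_zero.mpr hc
              rw [hst, hsa, div_mul_eq_mul_div]
              congr 1
              rw [eq_div_iff hcs]
              ring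
            rw [h3]
            exact hA.dotProduct_mulVec_nonneg z
        -- upper bound
        have hub : ∀ a' ∈ {a' : ℝ | (A - ((a' : ℝ) : ℂ) • B).PosSemidef}, a' ≤ r := by
          intro a' ha'
          have h := ha'.dotProduct_mulVec_nonneg x
          have hval : star x ⬝ᵥ ((A - ((a':ℝ):ℂ) • B) *ᵥ x) = (((r - a') * m : ℝ) : ℂ) := by
            rw [sub_mulVec, smul_mulVec, dotProduct_sub, dotProduct_smul, smul_eq_mul,
              ← hqdef, hq, har]
            have hBx : star x ⬝ᵥ (B *ᵥ x) = (m:ℂ) := by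
              rw [hBdec x, dotProduct_smul, smul_eq_mul, ← hcdef, hxv, hmc]
            rw [hBx]
            push_cast
            ring
          rw [hval] at h
          have := Complex.zero_le_real.mp h
          nlinarith
        have hsup : sSup {a' : ℝ | (A - ((a' : ℝ) : ℂ) • B).PosSemidef} = r :=
          le_antisymm (csSup_le ⟨r, hmem⟩ hub) (le_csSup ⟨r, hub⟩ hmem)
        rw [hsup, ← har]
    · intro x hx
      rw [LinearMap.mem_ker, mulVecLin_apply] at hx ⊢
      have hn : star v ⬝ᵥ v ≠ 0 := fun h => hv0 (dotProduct_star_self_eq_zero.mp h)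
      have hvmem : v ∈ LinearMap.range B.mulVecLin := by
        refine ⟨(star v ⬝ᵥ v)⁻¹ • v, ?_⟩
        rw [mulVecLin_apply, mulVec_smul, hBdec, smul_smul,
          inv_mul_cancel₀ hn, one_smul]
      obtain ⟨u, hu⟩ := hrange hvmem
      rw [mulVecLin_apply] at hu
      have hvx : star v ⬝ᵥ x = 0 := by
        rw [← hu, herm_dot hA.1, hx, dotProduct_zero]
      rw [sub_mulVec, smul_mulVec, hx, hBdec, hvx, zero_smul, smul_zero, sub_zero]
  have h1 := LinearMap.finrank_range_add_finrank_ker (A - a • B).mulVecLin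
  have h2 := LinearMap.finrank_range_add_finrank_ker A.mulVecLin
  rw [hker] at h1
  unfold Matrix.rank
  omega

/-- Lemma 1 (generic rank part): for `A, B` PSD with `B` of rank 1 and `range B ⊆ range A`, and
`a_max` the supremum of `{a : ℝ | A - a·B` is PSD`}`, every complex number `a ≠ a_max`
satisfies `rank (A - a·B) = rank A`. -/
theorem loewner_rank_lemma_generic
    (d : ℕ) (A B : Matrix (Fin d) (Fin d) ℂ)
    (hA : A.PosSemidef) (hB : B.PosSemidef) (hrankB : B.rank = 1)
    (hrange : LinearMap.range B.mulVecLin ≤ LinearMap.range A.mulVecLin) :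
    ∀ a : ℂ,
      a ≠ ((sSup {a' : ℝ | (A - ((a' : ℝ) : ℂ) • B).PosSemidef} : ℝ) : ℂ) →
      (A - a • B).rank = A.rank := by
  obtain ⟨v, hv0, hBdec⟩ := aux_decomp d B hB hrankB
  exact main_test d A B hA hB hrange v hv0 hBdec
end

section
/- Let A and B be positive semidefinite d×d complex matrices such that B has rank 1 and the range of B is contained in the range of A, and let a_max be the supremum of the set {a : ℝ | A − a·B is positive semidefinite}. If c is a real number such that A − c·B is positive semidefinite and rank(A − c·B) = rank(A) − 1, then c = a_max. -/
open Matrix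
open scoped ComplexOrder

/-- Lemma 1 (uniqueness part): for `A, B` PSD with `B` of rank 1 and `range B ⊆ range A`, if
`c : ℝ` is such that `A - c·B` is PSD and `rank (A - c·B) = rank A - 1`, then `c` equals the
supremum of `{a : ℝ | A - a·B` is PSD`}`. -/
theorem loewner_rank_lemma_unique
    (d : ℕ) (A B : Matrix (Fin d) (Fin d) ℂ)
    (hA : A.PosSemidef) (hB : B.PosSemidef) (hrankB : B.rank = 1)
    (hrange : LinearMap.range B.mulVecLin ≤ LinearMap.range A.mulVecLin)
    (c : ℝ) (hc : (A - ((c : ℝ) : ℂ) • B).PosSemidef)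
    (hrank : (A - ((c : ℝ) : ℂ) • B).rank = A.rank - 1) :
    c = sSup {a : ℝ | (A - ((a : ℝ) : ℂ) • B).PosSemidef} := by
  set M := A - ((c : ℝ) : ℂ) • B with hMdef
  -- ker A ⊆ ker B
  have hBA : ∀ x, A *ᵥ x = 0 → B *ᵥ x = 0 := by
    intro x hx
    obtain ⟨y, hy⟩ := hrange (LinearMap.mem_range_self B.mulVecLin x)
    simp only [mulVecLin_apply] at hy
    rw [← hB.dotProduct_mulVec_zero_iff x, ← hy, dotProduct_mulVec]
    have : star x ᵥ* A = 0 := by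
      calc star x ᵥ* A = star x ᵥ* Aᴴ := by rw [hA.1]
        _ = star (A *ᵥ x) := (star_mulVec A x).symm
        _ = 0 := by rw [hx]; simp
    rw [this, zero_dotProduct]
  -- ker A ≤ ker M
  have hker : LinearMap.ker A.mulVecLin ≤ LinearMap.ker M.mulVecLin := by
    intro x hx
    simp only [LinearMap.mem_ker, mulVecLin_apply] at hx ⊢
    rw [hMdef, sub_mulVec, smul_mulVec, hx, hBA x hx, smul_zero, sub_zero]
  -- rank facts
  have hrAnn : A.rank + Module.finrank ℂ (LinearMap.ker A.mulVecLin) = d := by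
    simpa [Matrix.rank] using LinearMap.finrank_range_add_finrank_ker A.mulVecLin
  have hrMnn : M.rank + Module.finrank ℂ (LinearMap.ker M.mulVecLin) = d := by
    simpa [Matrix.rank] using LinearMap.finrank_range_add_finrank_ker M.mulVecLin
  have hrA1 : 1 ≤ A.rank := by
    rw [← hrankB]
    exact Submodule.finrank_mono hrange
  have hfinlt : Module.finrank ℂ (LinearMap.ker A.mulVecLin)
      < Module.finrank ℂ (LinearMap.ker M.mulVecLin) := by
    omega
  have hlt : LinearMap.ker A.mulVecLin < LinearMap.ker M.mulVecLin :=
    hker.lt_of_ne (by intro h; rw [h] at hfinlt; exact lt_irrefl _ hfinlt)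
  obtain ⟨x, hxM, hxA⟩ := SetLike.exists_of_lt hlt
  simp only [LinearMap.mem_ker, mulVecLin_apply] at hxM hxA
  -- A x = c • B x
  have hAx : A *ᵥ x = ((c : ℝ) : ℂ) • (B *ᵥ x) := by
    have := hxM
    rw [hMdef, sub_mulVec, smul_mulVec, sub_eq_zero] at this
    exact this
  set α := star x ⬝ᵥ A *ᵥ x with hαdef
  set β := star x ⬝ᵥ B *ᵥ x with hβdef
  have hαβ : α = ((c : ℝ) : ℂ) * β := by
    rw [hαdef, hAx, dotProduct_smul, smul_eq_mul]
  have hαne : α ≠ 0 := fun h => hxA ((hA.dotProduct_mulVec_zero_iff x).mp h)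
  have hβ0 : 0 ≤ β := hB.dotProduct_mulVec_nonneg x
  have hβim : β.im = 0 := by
    have := (Complex.le_def.mp hβ0).2
    simpa using this.symm
  have hβre : 0 < β.re := by
    rcases lt_or_eq_of_le (Complex.le_def.mp hβ0).1 with h | h
    · simpa using h
    · exfalso
      apply hαne
      rw [hαβ]
      have : β = 0 := Complex.ext (by simpa using h.symm) (by simpa using hβim)
      rw [this, mul_zero]
  have hβeq : β = ((β.re : ℝ) : ℂ) := by
    exact (Complex.ext (by simp) (by simp [hβim])).symm
  -- upper bound
  have hub : ∀ a ∈ {a : ℝ | (A - ((a : ℝ) : ℂ) • B).PosSemidef}, a ≤ c := by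
    intro a ha
    have h0 : 0 ≤ star x ⬝ᵥ (A - ((a : ℝ) : ℂ) • B) *ᵥ x := ha.dotProduct_mulVec_nonneg x
    have hcalc : star x ⬝ᵥ (A - ((a : ℝ) : ℂ) • B) *ᵥ x
        = (((c - a) * β.re : ℝ) : ℂ) := by
      rw [sub_mulVec, smul_mulVec, dotProduct_sub, dotProduct_smul,
        smul_eq_mul, ← hαdef, ← hβdef, hαβ, ← sub_mul, hβeq]
      simp only [Complex.ofReal_re]
      push_cast
      ring
    rw [hcalc] at h0
    have : (0 : ℝ) ≤ (c - a) * β.re := by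
      have := Complex.le_def.mp h0
      simpa using this.1
    nlinarith
  have hgreat : IsGreatest {a : ℝ | (A - ((a : ℝ) : ℂ) • B).PosSemidef} c :=
    ⟨hc, hub⟩
  exact (hgreat.csSup_eq).symm
end
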